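/- For every integer n ≥ 0 and every pivoting-equivalence class s̄ of complete binary trees with 2n+1 vertices, the integer (n+1)·T(s̄) is divisible by 2^{2n}. -/

import Mathlib

/-- Binary trees: every vertex has an ordered pair of (possibly empty) subtrees.
`nil` is the empty tree; vertices are the `node` constructors. -/
inductive BTree : Type
  | nil : BTree
  | node : BTree → BTree → BTree
deriving DecidableEq

/-- The number of vertices of a binary tree. -/
def BTree.size : BTree → ℕ
  | .nil => 0
  | .node l r => 1 + l.size + r.size

/-- The product of the hook lengths of all vertices of a binary tree, where the
hook length of a vertex is the number of its descendants (including itself). -/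
def BTree.hookProd : BTree → ℕ
  | .nil => 1
  | .node l r => (BTree.node l r).size * l.hookProd * r.hookProd

/-- A binary tree is complete if for every vertex the two subtrees are either
both empty or both nonempty. -/
inductive BTree.Complete : BTree → Prop
  | nil : BTree.Complete .nil
  | leaf : BTree.Complete (.node .nil .nil)
  | node {l r : BTree} : l ≠ .nil → r ≠ .nil → l.Complete → r.Complete →
      BTree.Complete (.node l r)

/-- A basic pivoting: the exchange of the two subtrees of a non-leaf vertex. -/
inductive BTree.Pivot : BTree → BTree → Prop
  | swap {l r : BTree} : l ≠ .nil → r ≠ .nil → BTree.Pivot (.node l r) (.node r l)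
  | left {l l' : BTree} (r : BTree) : BTree.Pivot l l' →
      BTree.Pivot (.node l r) (.node l' r)
  | right (l : BTree) {r r' : BTree} : BTree.Pivot r r' →
      BTree.Pivot (.node l r) (.node l r')

/-- Two binary trees are pivoting-equivalent if one is obtained from the other by a
finite sequence of basic pivotings. -/
def BTree.PivotEquiv : BTree → BTree → Prop := Relation.ReflTransGen BTree.Pivot

/-- Labelled binary trees: every vertex carries a natural number label. -/
inductive LBTree : Type
  | nil : LBTree
  | node : ℕ → LBTree → LBTree → LBTree

/-- The underlying (unlabelled) shape of a labelled binary tree. -/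
def LBTree.shape : LBTree → BTree
  | .nil => .nil
  | .node _ l r => .node l.shape r.shape

/-- The multiset of labels of a labelled binary tree. -/
def LBTree.labels : LBTree → Multiset ℕ
  | .nil => 0
  | .node a l r => a ::ₘ (l.labels + r.labels)

/-- A labelled binary tree is increasing if the label of each vertex is smaller
than the labels of all its descendants. -/
inductive LBTree.Increasing : LBTree → Prop
  | nil : LBTree.Increasing .nil
  | node {a : ℕ} {l r : LBTree} :
      (∀ b ∈ l.labels, a < b) → (∀ b ∈ r.labels, a < b) →
      l.Increasing → r.Increasing → LBTree.Increasing (.node a l r)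

/-- `lcount s` is the number of increasing labellings of the binary tree `s`
by the labels `{1, …, size s}`. -/
noncomputable def lcount (s : BTree) : ℕ :=
  {l : LBTree | l.shape = s ∧
      l.labels = Multiset.map (· + 1) (Multiset.range s.size) ∧
      l.Increasing}.ncard

/-- `Tbar s` is the total number of increasing labelled binary trees whose shape is
pivoting-equivalent to `s`, i.e. `T(s̄) = ∑_{s' ∈ s̄} #L(s')`. -/
noncomputable def Tbar (s : BTree) : ℕ :=
  ∑ᶠ s' ∈ {s' | BTree.PivotEquiv s s'}, lcount s'

def bcount : BTree → ℕ
  | .nil => 1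
  | .node l r => Nat.choose (l.size + r.size) l.size * (bcount l * bcount r)

def labSet (s : BTree) (M : Multiset ℕ) : Set LBTree :=
  {t : LBTree | t.shape = s ∧ t.labels = M ∧ t.Increasing}

lemma card_labels (t : LBTree) : Multiset.card t.labels = t.shape.size := by
  induction t with
  | nil => simp [LBTree.labels, LBTree.shape, BTree.size]
  | node a l r ihl ihr =>
      simp [LBTree.labels, LBTree.shape, BTree.size, ihl, ihr]; omega

private lemma nat_card_sigma {ι : Type*} [Fintype ι] (f : ι → Type*) [∀ i, Finite (f i)] :
    Nat.card ((i : ι) × f i) = ∑ i, Nat.card (f i) := by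
  classical
  letI : ∀ i, Fintype (f i) := fun i => Fintype.ofFinite (f i)
  simp [Nat.card_eq_fintype_card, Fintype.card_sigma]

theorem labSet_card (s : BTree) (A : Finset ℕ) (hA : A.card = s.size) :
    (labSet s A.val).Finite ∧ (labSet s A.val).ncard = bcount s := by
  induction s generalizing A with
  | nil =>
    have hA0 : A = ∅ := Finset.card_eq_zero.mp (by simpa [BTree.size] using hA)
    subst hA0
    have hset : labSet .nil (∅ : Finset ℕ).val = {LBTree.nil} := by
      ext t
      constructor
      · rintro ⟨h1, h2, h3⟩
        cases t with
        | nil => rfl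
        | node a l r => simp [LBTree.shape] at h1
      · rintro rfl
        exact ⟨rfl, by simp [LBTree.labels], .nil⟩
    rw [hset]
    exact ⟨Set.finite_singleton _, by simp [Set.ncard_singleton, bcount]⟩
  | node l r ihl ihr =>
    classical
    have hsz : A.card = 1 + l.size + r.size := by simpa [BTree.size] using hA
    have hne : A.Nonempty := Finset.card_pos.mp (by omega)
    set m := A.min' hne with hm
    have hmA : m ∈ A := A.min'_mem hne
    set E := A.erase m with hEdef
    have hEcard : E.card = l.size + r.size := by
      rw [hEdef, Finset.card_erase_of_mem hmA]; omega
    have hmE : ∀ b ∈ E, m < b := by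
      intro b hb
      have hbA : b ∈ A := Finset.mem_of_mem_erase hb
      have hbm : b ≠ m := Finset.ne_of_mem_erase hb
      exact lt_of_le_of_ne (A.min'_le b hbA) (Ne.symm hbm)
    have hEA : E.val = A.val.erase m := by rw [hEdef, Finset.erase_val]
    let ι := {B : Finset ℕ // B ∈ Finset.powersetCard l.size E}
    let SL : ι → Set LBTree := fun B => labSet l B.1.val
    let SR : ι → Set LBTree := fun B => labSet r (E \ B.1).val
    have hBsub : ∀ B : ι, B.1 ⊆ E := fun B => (Finset.mem_powersetCard.mp B.2).1
    have hBcard : ∀ B : ι, B.1.card = l.size := fun B => (Finset.mem_powersetCard.mp B.2).2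
    have hSL : ∀ B : ι, (SL B).Finite ∧ (SL B).ncard = bcount l := fun B => ihl _ (hBcard B)
    have hSR : ∀ B : ι, (SR B).Finite ∧ (SR B).ncard = bcount r := fun B => by
      apply ihr
      rw [Finset.card_sdiff_of_subset (hBsub B), hEcard, hBcard B]; omega
    have hsd : ∀ B : ι, B.1.val + (E \ B.1).val = E.val := by
      intro B
      rw [Finset.sdiff_val]
      exact add_tsub_cancel_of_le (Finset.val_le_iff.mpr (hBsub B))
    let f : ((B : ι) × (↥(SL B) × ↥(SR B))) → ↥(labSet (.node l r) A.val) := fun x =>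
      ⟨LBTree.node m x.2.1.1 x.2.2.1, by
        obtain ⟨B, ⟨t, ht1, ht2, ht3⟩, ⟨u, hu1, hu2, hu3⟩⟩ := x
        refine ⟨by simp [LBTree.shape, ht1, hu1], ?_, ?_⟩
        · show m ::ₘ (t.labels + u.labels) = A.val
          rw [ht2, hu2, hsd B, hEA, Multiset.cons_erase hmA]
        · refine LBTree.Increasing.node ?_ ?_ ht3 hu3
          · intro b hb
            rw [ht2] at hb
            exact hmE b (hBsub B hb)
          · intro b hb
            rw [hu2] at hb
            exact hmE b (Finset.sdiff_subset hb)⟩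
    have hfbij : Function.Bijective f := by
      constructor
      · rintro ⟨B, ⟨t, ht⟩, ⟨u, hu⟩⟩ ⟨B', ⟨t', ht'⟩, ⟨u', hu'⟩⟩ hEq
        have h1 : LBTree.node m t u = LBTree.node m t' u' := congrArg Subtype.val hEq
        injection h1 with _ h2 h3
        have hBB : B = B' := by
          apply Subtype.ext; apply Finset.val_injective
          calc B.1.val = t.labels := ht.2.1.symm
            _ = t'.labels := by rw [h2]
            _ = B'.1.val := ht'.2.1
        subst hBB; subst h2; subst h3
        rfl
      · rintro ⟨t, ht1, ht2, ht3⟩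
        cases t with
        | nil => simp [LBTree.shape] at ht1
        | node a tl tr =>
          simp only [LBTree.shape, BTree.node.injEq] at ht1
          obtain ⟨hsl, hsr⟩ := ht1
          have hlab : a ::ₘ (tl.labels + tr.labels) = A.val := ht2
          cases ht3 with
          | node hal har hil hir =>
          have haA : a ∈ A := by
            rw [Finset.mem_def, ← hlab]; exact Multiset.mem_cons_self _ _
          have ham : a = m := by
            have h1 : m ≤ a := A.min'_le a haA
            have h2 : (m : ℕ) ∈ (a ::ₘ (tl.labels + tr.labels)) := by
              rw [hlab]; exact hmA
            rcases Multiset.mem_cons.mp h2 with h | h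
            · exact h.symm
            · rcases Multiset.mem_add.mp h with h' | h'
              · have := hal m h'; omega
              · have := har m h'; omega
          have hrest : tl.labels + tr.labels = E.val := by
            rw [hEA, ← hlab, ← ham, Multiset.erase_cons_head]
          have hnd : (tl.labels + tr.labels).Nodup := hrest ▸ E.nodup
          have hndl : tl.labels.Nodup := Multiset.nodup_of_le (Multiset.le_add_right _ _) hnd
          have hB₀mem : (⟨tl.labels, hndl⟩ : Finset ℕ) ∈ Finset.powersetCard l.size E := by
            rw [Finset.mem_powersetCard]
            constructor
            · intro x hx
              rw [Finset.mem_def] at hx ⊢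
              rw [hEA, ← hlab, ← ham, Multiset.erase_cons_head]
              exact Multiset.mem_add.mpr (Or.inl hx)
            · show Multiset.card tl.labels = l.size
              rw [card_labels, hsl]
          refine ⟨⟨⟨⟨tl.labels, hndl⟩, hB₀mem⟩, ⟨tl, ?_⟩, ⟨tr, ?_⟩⟩, ?_⟩
          · exact ⟨hsl, rfl, hil⟩
          · refine ⟨hsr, ?_, hir⟩
            show tr.labels = (E \ ⟨tl.labels, hndl⟩).val
            rw [Finset.sdiff_val, ← hrest]
            show tr.labels = tl.labels + tr.labels - tl.labels
            rw [add_tsub_cancel_left]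
          · apply Subtype.ext
            show LBTree.node m tl tr = LBTree.node a tl tr
            rw [ham]
    haveI hfinL : ∀ B : ι, Finite ↥(SL B) := fun B => (hSL B).1.to_subtype
    haveI hfinR : ∀ B : ι, Finite ↥(SR B) := fun B => (hSR B).1.to_subtype
    haveI hfinS : Finite ↥(labSet (.node l r) A.val) := Finite.of_surjective f hfbij.2
    constructor
    · exact Set.finite_coe_iff.mp hfinS
    · have h1 : (labSet (.node l r) A.val).ncard
          = Nat.card ((B : ι) × (↥(SL B) × ↥(SR B))) := by
        rw [← Nat.card_coe_set_eq, Nat.card_eq_of_bijective f hfbij]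
      rw [h1, nat_card_sigma]
      have hterm : ∀ B : ι, Nat.card (↥(SL B) × ↥(SR B)) = bcount l * bcount r := by
        intro B
        rw [Nat.card_prod, Nat.card_coe_set_eq, Nat.card_coe_set_eq,
          (hSL B).2, (hSR B).2]
      rw [Finset.sum_congr rfl (fun B _ => hterm B), Finset.sum_const, smul_eq_mul,
        Finset.card_univ]
      show Fintype.card {B // B ∈ Finset.powersetCard l.size E} * _ = _
      rw [Fintype.card_coe, Finset.card_powersetCard, hEcard]
      rfl
lemma pivot_ne_nil {s t : BTree} (h : BTree.Pivot s t) : t ≠ BTree.nil := by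
  cases h <;> exact fun hc => BTree.noConfusion hc

lemma pivot_symm {s t : BTree} (h : BTree.Pivot s t) : BTree.Pivot t s := by
  induction h with
  | swap hl hr => exact .swap hr hl
  | left r h ih => exact .left r ih
  | right l h ih => exact .right l ih

lemma pivot_size {s t : BTree} (h : BTree.Pivot s t) : t.size = s.size := by
  induction h with
  | swap hl hr => simp [BTree.size]; omega
  | left r h ih => simp [BTree.size]; omega
  | right l h ih => simp [BTree.size]; omega

lemma pe_symm {s t : BTree} (h : BTree.PivotEquiv s t) : BTree.PivotEquiv t s :=
  haveI : Std.Symm BTree.Pivot := ⟨fun _ _ hp => pivot_symm hp⟩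
  Std.Symm.symm (r := Relation.ReflTransGen BTree.Pivot) _ _ h

lemma pe_trans {s t u : BTree} (h1 : BTree.PivotEquiv s t) (h2 : BTree.PivotEquiv t u) :
    BTree.PivotEquiv s u := h1.trans h2

lemma pe_ne_nil {s t : BTree} (h : BTree.PivotEquiv s t) (hs : s ≠ BTree.nil) :
    t ≠ BTree.nil := by
  induction h with
  | refl => exact hs
  | tail h1 h2 ih => exact pivot_ne_nil h2

lemma pe_size {s t : BTree} (h : BTree.PivotEquiv s t) : t.size = s.size := by
  induction h with
  | refl => rfl
  | tail h1 h2 ih => exact (pivot_size h2).trans ih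

def cls (s : BTree) : Set BTree := {t | BTree.PivotEquiv s t}

lemma self_mem_cls (s : BTree) : s ∈ cls s := Relation.ReflTransGen.refl

lemma cls_leaf : cls (BTree.node .nil .nil) = {BTree.node BTree.nil BTree.nil} := by
  ext t
  simp only [cls, Set.mem_setOf_eq, Set.mem_singleton_iff]
  constructor
  · intro h
    induction h with
    | refl => rfl
    | tail h1 h2 ih =>
      subst ih
      cases h2 with
      | swap hl hr => exact absurd rfl hl
      | left r h => cases h
      | right l h => cases h
  · rintro rfl; exact Relation.ReflTransGen.refl

lemma cls_node {l r : BTree} (hl : l ≠ .nil) (hr : r ≠ .nil) :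
    cls (BTree.node l r) =
      Set.image2 BTree.node (cls l) (cls r) ∪ Set.image2 BTree.node (cls r) (cls l) := by
  ext t
  constructor
  · intro h
    induction h with
    | refl => exact Or.inl (Set.mem_image2_of_mem (self_mem_cls l) (self_mem_cls r))
    | tail h1 h2 ih =>
      rcases ih with h | h
      · obtain ⟨x, hx, y, hy, rfl⟩ := h
        cases h2 with
        | swap h2l h2r => exact Or.inr (Set.mem_image2_of_mem hy hx)
        | left r0 hp => exact Or.inl (Set.mem_image2_of_mem (hx.tail hp) hy)
        | right l0 hp => exact Or.inl (Set.mem_image2_of_mem hx (hy.tail hp))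
      · obtain ⟨y, hy, x, hx, rfl⟩ := h
        cases h2 with
        | swap h2l h2r => exact Or.inl (Set.mem_image2_of_mem hx hy)
        | left r0 hp => exact Or.inr (Set.mem_image2_of_mem (hy.tail hp) hx)
        | right l0 hp => exact Or.inr (Set.mem_image2_of_mem hy (hx.tail hp))
  · rintro (⟨x, hx, y, hy, rfl⟩ | ⟨y, hy, x, hx, rfl⟩)
    · exact (Relation.ReflTransGen.lift (fun z => BTree.node z r)
          (fun a b h => BTree.Pivot.left r h) _ _ hx).trans
        (Relation.ReflTransGen.lift (fun z => BTree.node x z)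
          (fun a b h => BTree.Pivot.right x h) _ _ hy)
    · refine Relation.ReflTransGen.tail
        ((Relation.ReflTransGen.lift (fun z => BTree.node z r)
            (fun a b h => BTree.Pivot.left r h) _ _ hx).trans
          (Relation.ReflTransGen.lift (fun z => BTree.node x z)
            (fun a b h => BTree.Pivot.right x h) _ _ hy))
        (BTree.Pivot.swap (pe_ne_nil hx hl) (pe_ne_nil hy hr))

lemma cls_finite {s : BTree} (hc : s.Complete) (hs : s ≠ .nil) : (cls s).Finite := by
  induction hc with
  | nil => exact absurd rfl hs
  | leaf => rw [cls_leaf]; exact Set.finite_singleton _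
  | node hl hr hcl hcr ihl ihr =>
    rw [cls_node hl hr]
    exact ((ihl hl).image2 _ (ihr hr)).union ((ihr hr).image2 _ (ihl hl))

lemma complete_size_odd {s : BTree} (hc : s.Complete) (hs : s ≠ .nil) :
    ∃ k, s.size = 2 * k + 1 := by
  induction hc with
  | nil => exact absurd rfl hs
  | leaf => exact ⟨0, by simp [BTree.size]⟩
  | node hl hr hcl hcr ihl ihr =>
    obtain ⟨a, ha⟩ := ihl hl
    obtain ⟨b, hb⟩ := ihr hr
    exact ⟨a + b + 1, by simp [BTree.size, ha, hb]; omega⟩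

-- ===== Tbar recursion =====
lemma lcount_eq_bcount (s : BTree) : lcount s = bcount s := by
  classical
  have hF : ((Finset.range s.size).map ⟨fun x => x + 1, add_left_injective 1⟩).card = s.size := by
    simp
  have h2 := (labSet_card s _ hF).2
  have hval : ((Finset.range s.size).map ⟨fun x => x + 1, add_left_injective 1⟩).val
      = Multiset.map (· + 1) (Multiset.range s.size) := by
    simp [Finset.map_val, Finset.range_val]
  rw [hval] at h2
  exact h2

lemma lcount_node (x y : BTree) :
    lcount (BTree.node x y) = Nat.choose (x.size + y.size) x.size * (lcount x * lcount y) := by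
  rw [lcount_eq_bcount, lcount_eq_bcount, lcount_eq_bcount]
  rfl

lemma Tbar_cls (s : BTree) : Tbar s = ∑ᶠ t ∈ cls s, lcount t := rfl

lemma Tbar_eq_sum {s : BTree} (h : (cls s).Finite) :
    Tbar s = ∑ t ∈ h.toFinset, lcount t := by
  rw [Tbar_cls, ← finsum_mem_coe_finset, Set.Finite.coe_toFinset]

lemma Tbar_leaf : Tbar (BTree.node .nil .nil) = 1 := by
  rw [Tbar_cls, cls_leaf, finsum_mem_singleton, lcount_eq_bcount]
  simp [bcount, BTree.size]

lemma sum_image2 {s1 s2 : BTree} (hf1 : (cls s1).Finite) (hf2 : (cls s2).Finite) :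
    ∑ᶠ t ∈ Set.image2 BTree.node (cls s1) (cls s2), lcount t
      = Nat.choose (s1.size + s2.size) s1.size * (Tbar s1 * Tbar s2) := by
  classical
  have hcoe : Set.image2 BTree.node (cls s1) (cls s2)
      = ↑(Finset.image₂ BTree.node hf1.toFinset hf2.toFinset) := by
    rw [Finset.coe_image₂, Set.Finite.coe_toFinset, Set.Finite.coe_toFinset]
  rw [hcoe, finsum_mem_coe_finset]
  rw [← Finset.image_uncurry_product, Finset.sum_image]
  · rw [Finset.sum_product]
    have hterm : ∀ x ∈ hf1.toFinset, ∀ y ∈ hf2.toFinset,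
        lcount (BTree.node x y)
          = Nat.choose (s1.size + s2.size) s1.size * (lcount x * lcount y) := by
      intro x hx y hy
      rw [lcount_node]
      rw [Set.Finite.mem_toFinset] at hx hy
      rw [pe_size hx, pe_size hy]
    calc ∑ x ∈ hf1.toFinset, ∑ y ∈ hf2.toFinset, lcount (Function.uncurry BTree.node (x, y))
        = ∑ x ∈ hf1.toFinset, ∑ y ∈ hf2.toFinset,
            Nat.choose (s1.size + s2.size) s1.size * (lcount x * lcount y) := by
          apply Finset.sum_congr rfl
          intro x hx
          apply Finset.sum_congr rfl
          intro y hy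
          exact hterm x hx y hy
      _ = Nat.choose (s1.size + s2.size) s1.size * (Tbar s1 * Tbar s2) := by
          rw [Tbar_eq_sum hf1, Tbar_eq_sum hf2, Finset.sum_mul_sum, Finset.mul_sum]
          apply Finset.sum_congr rfl
          intro x _
          rw [Finset.mul_sum]
  · intro p hp q hq hEq
    have := (BTree.node.injEq _ _ _ _).mp hEq
    exact Prod.ext this.1 this.2

lemma cls_eq_of_pe {l r : BTree} (h : BTree.PivotEquiv l r) : cls r = cls l := by
  ext t
  exact ⟨fun ht => pe_trans h ht, fun ht => pe_trans (pe_symm h) ht⟩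

lemma Tbar_node_pe {l r : BTree} (hl : l ≠ .nil) (hr : r ≠ .nil)
    (hcl : l.Complete) (hcr : r.Complete) (heq : BTree.PivotEquiv l r) :
    Tbar (BTree.node l r) = Nat.choose (l.size + r.size) l.size * (Tbar l * Tbar r) := by
  have hfl := cls_finite hcl hl
  have hfr := cls_finite hcr hr
  have hsz : r.size = l.size := pe_size heq
  have hT : Tbar r = Tbar l := by rw [Tbar_cls, Tbar_cls, cls_eq_of_pe heq]
  rw [Tbar_cls, cls_node hl hr, cls_eq_of_pe heq, Set.union_self, sum_image2 hfl hfl]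
  rw [hsz, hT]

lemma Tbar_node_ne {l r : BTree} (hl : l ≠ .nil) (hr : r ≠ .nil)
    (hcl : l.Complete) (hcr : r.Complete) (hne : ¬ BTree.PivotEquiv l r) :
    Tbar (BTree.node l r)
      = 2 * (Nat.choose (l.size + r.size) l.size * (Tbar l * Tbar r)) := by
  have hfl := cls_finite hcl hl
  have hfr := cls_finite hcr hr
  have hdisj : Disjoint (Set.image2 BTree.node (cls l) (cls r))
      (Set.image2 BTree.node (cls r) (cls l)) := by
    rw [Set.disjoint_left]
    rintro t ⟨x, hx, y, hy, rfl⟩ ⟨y', hy', x', hx', hEq⟩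
    have h2 := (BTree.node.injEq _ _ _ _).mp hEq.symm
    apply hne
    exact pe_trans hx (pe_symm (h2.1 ▸ hy'))
  rw [Tbar_cls, cls_node hl hr,
    finsum_mem_union hdisj (hfl.image2 _ hfr) (hfr.image2 _ hfl),
    sum_image2 hfl hfr, sum_image2 hfr hfl]
  have hchoose : Nat.choose (r.size + l.size) r.size = Nat.choose (l.size + r.size) l.size := by
    have h := Nat.choose_symm (show l.size ≤ l.size + r.size by omega)
    rw [show l.size + r.size - l.size = r.size from by omega] at h
    rw [add_comm r.size l.size, h]
  rw [hchoose]
  ring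

-- ===== arithmetic =====
lemma key_identity (a b : ℕ) :
    (2*a+2*b+3) * ((a+b+2) * Nat.choose (2*a+2*b+2) (2*a+1)) =
      (2*(a+1)) * ((b+1) * Nat.choose (2*a+2*b+4) (2*a+2)) := by
  have c1 := Nat.choose_mul_factorial_mul_factorial (show 2*a+1 ≤ 2*a+2*b+2 by omega)
  have c2 := Nat.choose_mul_factorial_mul_factorial (show 2*a+2 ≤ 2*a+2*b+4 by omega)
  rw [show 2*a+2*b+2 - (2*a+1) = 2*b+1 from by omega] at c1
  rw [show 2*a+2*b+4 - (2*a+2) = 2*b+2 from by omega] at c2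
  have e1 : (2*a+2).factorial = (2*a+2) * (2*a+1).factorial := by
    rw [show 2*a+2 = (2*a+1)+1 from by omega, Nat.factorial_succ]
  have e2 : (2*b+2).factorial = (2*b+2) * (2*b+1).factorial := by
    rw [show 2*b+2 = (2*b+1)+1 from by omega, Nat.factorial_succ]
  have e3 : (2*a+2*b+4).factorial = (2*a+2*b+4) * ((2*a+2*b+3) * (2*a+2*b+2).factorial) := by
    rw [show 2*a+2*b+4 = (2*a+2*b+3)+1 from by omega, Nat.factorial_succ,
      show 2*a+2*b+3 = (2*a+2*b+2)+1 from by omega, Nat.factorial_succ]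
  apply Nat.eq_of_mul_eq_mul_right
    (show 0 < ((2*a+2)*(2*b+2)) * ((2*a+1).factorial * (2*b+1).factorial) from by
      positivity)
  calc (2*a+2*b+3) * ((a+b+2) * Nat.choose (2*a+2*b+2) (2*a+1))
        * (((2*a+2)*(2*b+2)) * ((2*a+1).factorial * (2*b+1).factorial))
      = (2*a+2*b+3) * (a+b+2) * ((2*a+2)*(2*b+2))
          * (Nat.choose (2*a+2*b+2) (2*a+1) * (2*a+1).factorial * (2*b+1).factorial) := by
        ring
    _ = (2*a+2*b+3) * (a+b+2) * ((2*a+2)*(2*b+2)) * (2*a+2*b+2).factorial := by rw [c1]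
    _ = (2*(a+1)) * ((b+1)) * ((2*a+2*b+4) * ((2*a+2*b+3) * (2*a+2*b+2).factorial)) := by
        ring
    _ = (2*(a+1)) * ((b+1)) * (2*a+2*b+4).factorial := by rw [e3]
    _ = (2*(a+1)) * ((b+1)) * (Nat.choose (2*a+2*b+4) (2*a+2) * (2*a+2).factorial
          * (2*b+2).factorial) := by rw [c2]
    _ = (2*(a+1)) * ((b+1) * Nat.choose (2*a+2*b+4) (2*a+2))
        * (((2*a+2)*(2*b+2)) * ((2*a+1).factorial * (2*b+1).factorial)) := by
        rw [e1, e2]; ring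

lemma coprime_pow_two (k m : ℕ) (hm : m % 2 = 1) : Nat.Coprime (2 ^ k) m := by
  apply Nat.Coprime.pow_left
  rw [Nat.Prime.coprime_iff_not_dvd Nat.prime_two]
  omega

lemma key_dvd (a b : ℕ) :
    2 ^ ((a+1).factorization 2 + (b+1).factorization 2 + 1) ∣
      (a + b + 2) * Nat.choose (2*a+2*b+2) (2*a+1) := by
  have h1 : (2:ℕ) ^ ((a+1).factorization 2) ∣ (a+1) := Nat.ordProj_dvd _ _
  have h2 : (2:ℕ) ^ ((b+1).factorization 2) ∣ (b+1) := Nat.ordProj_dvd _ _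
  have h3 : 2 ^ ((a+1).factorization 2 + (b+1).factorization 2 + 1) ∣
      (2*(a+1)) * ((b+1) * Nat.choose (2*a+2*b+4) (2*a+2)) := by
    have hpow : (2:ℕ) ^ ((a+1).factorization 2 + (b+1).factorization 2 + 1)
        = (2 * 2 ^ ((a+1).factorization 2)) * 2 ^ ((b+1).factorization 2) := by
      rw [pow_add, pow_one]; ring
    rw [hpow]
    exact mul_dvd_mul (mul_dvd_mul (dvd_refl 2) h1) (dvd_mul_of_dvd_left h2 _)
  rw [← key_identity a b] at h3
  exact (coprime_pow_two _ _ (by omega)).dvd_of_dvd_mul_left h3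

/-- For every pivoting-equivalence class `s̄` of complete binary trees with `2n+1`
vertices, `(n+1) * T(s̄)` is divisible by `2 ^ (2n)`. -/
theorem genocchi_class_divisibility (n : ℕ) (s : BTree)
    (hs : s.Complete) (hsize : s.size = 2 * n + 1) :
    2 ^ (2 * n) ∣ (n + 1) * Tbar s := by
  induction hs generalizing n with
  | nil => simp [BTree.size] at hsize
  | leaf =>
    have hn : n = 0 := by simp [BTree.size] at hsize; omega
    subst hn
    simp [Tbar_leaf]
  | @node l r hl hr hcl hcr ihl ihr =>
    obtain ⟨a, ha⟩ := complete_size_odd hcl hl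
    obtain ⟨b, hb⟩ := complete_size_odd hcr hr
    have hn : n = a + b + 1 := by simp [BTree.size, ha, hb] at hsize; omega
    subst hn
    have IHa : 2^(2*a) ∣ (a+1) * Tbar l := ihl a ha
    have IHb : 2^(2*b) ∣ (b+1) * Tbar r := ihr b hb
    by_cases hpe : BTree.PivotEquiv l r
    · have hab : a = b := by have := pe_size hpe; rw [ha, hb] at this; omega
      subst hab
      rw [Tbar_node_pe hl hr hcl hcr hpe, ha, hb]
      have hcb : Nat.choose ((2*a+1) + (2*a+1)) (2*a+1) = Nat.centralBinom (2*a+1) := by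
        rw [Nat.centralBinom]; congr 1; ring
      obtain ⟨c, hc⟩ := Nat.succ_dvd_centralBinom (2*a+1)
      obtain ⟨K, hK⟩ := IHa
      obtain ⟨M, hM⟩ := IHb
      refine ⟨c * (K * M), ?_⟩
      rw [hcb, hc]
      calc (a + a + 1 + 1) * ((2*a+1+1) * c * (Tbar l * Tbar r))
          = c * (((a+1) * Tbar l) * ((a+1) * Tbar r)) * 4 := by ring
        _ = c * ((2^(2*a) * K) * (2^(2*a) * M)) * 4 := by rw [hK, hM]
        _ = 2^(2*(a+a+1)) * (c * (K * M)) := by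
            rw [show 2*(a+a+1) = 2*a + (2*a+2) from by ring, pow_add, pow_add]
            ring
    · rw [Tbar_node_ne hl hr hcl hcr hpe, ha, hb]
      obtain ⟨W, hW⟩ := key_dvd a b
      obtain ⟨K, hK⟩ := IHa
      obtain ⟨M, hM⟩ := IHb
      set α := (a+1).factorization 2 with hα
      set β := (b+1).factorization 2 with hβ
      set C := Nat.choose (2*a+2*b+2) (2*a+1) with hC
      set u := (a+1) / 2^α with hudef
      set v := (b+1) / 2^β with hvdef
      have hu : 2^α * u = a + 1 := Nat.ordProj_mul_ordCompl_eq_self (a+1) 2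
      have hv : 2^β * v = b + 1 := Nat.ordProj_mul_ordCompl_eq_self (b+1) 2
      have hunotdvd : ¬ 2 ∣ u := Nat.not_dvd_ordCompl Nat.prime_two (by omega)
      have hvnotdvd : ¬ 2 ∣ v := Nat.not_dvd_ordCompl Nat.prime_two (by omega)
      have E1 : (a+1) * ((b+1) * ((a+b+2) * (2 * (C * (Tbar l * Tbar r)))))
          = 2 * (((a+b+2) * C) * (((a+1) * Tbar l) * ((b+1) * Tbar r))) := by ring
      rw [hW, hK, hM, ← hu, ← hv] at E1
      have E2 : u * v * ((a+b+2) * (2 * (C * (Tbar l * Tbar r)))) * 2^(α+β)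
          = (2^(2*(a+b+1)) * (W * (K * M))) * 2^(α+β) := by
        calc u * v * ((a+b+2) * (2 * (C * (Tbar l * Tbar r)))) * 2^(α+β)
            = 2^α * u * (2^β * v * ((a+b+2) * (2 * (C * (Tbar l * Tbar r))))) := by
              rw [pow_add]; ring
          _ = 2 * ((2^(α+β+1) * W) * ((2^(2*a) * K) * (2^(2*b) * M))) := E1
          _ = (2^(2*(a+b+1)) * (W * (K * M))) * 2^(α+β) := by
              rw [show (2:ℕ)^(α+β+1) = 2^(α+β) * 2 from by rw [pow_succ],
                show (2:ℕ)^(2*(a+b+1)) = 2^(2*a) * (2^(2*b) * 4) from by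
                  rw [show 2*(a+b+1) = 2*a + (2*b+2) from by ring, pow_add, pow_add]
                  norm_num]
              ring
      have E3 := Nat.eq_of_mul_eq_mul_right (pow_pos (by norm_num : (0:ℕ) < 2) (α+β)) E2
      have hdvd : 2^(2*(a+b+1)) ∣ u * v * ((a+b+2) * (2 * (C * (Tbar l * Tbar r)))) :=
        ⟨W * (K * M), E3⟩
      have hcop : Nat.Coprime (2^(2*(a+b+1))) (u * v) := by
        have h1 : u % 2 = 1 := by omega
        have h2 : v % 2 = 1 := by omega
        exact Nat.Coprime.mul_right (coprime_pow_two _ _ h1) (coprime_pow_two _ _ h2)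
      have final : 2^(2*(a+b+1)) ∣ (a+b+2) * (2 * (C * (Tbar l * Tbar r))) :=
        hcop.dvd_of_dvd_mul_left hdvd
      have goal_eq : (a+b+1+1) * (2 * (Nat.choose ((2*a+1) + (2*b+1)) (2*a+1) * (Tbar l * Tbar r)))
          = (a+b+2) * (2 * (C * (Tbar l * Tbar r))) := by
        rw [hC, show (2*a+1) + (2*b+1) = 2*a+2*b+2 from by ring,
          show a+b+1+1 = a+b+2 from by ring]
      rw [goal_eq]
      exact final
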